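/- In a DAG, if a and b are d-separated given D, a and b are d-connected given D ∪ {s}, and s is an ancestor of b, then a contradiction follows; that is, if a ⊥_d b | D and a ⊥̸_d b | D ∪ {s}, then s is not an ancestor of b (and by symmetry not an ancestor of a). -/
import Mathlib


structure MDAG (V : Type) where
  dir : V → V → Prop
  face : Finset V → Prop

namespace MDAG

variable {V : Type}

/-- Two vertices lie in a common bidirected face. -/
def bi (G : MDAG V) (a b : V) : Prop := a ≠ b ∧ ∃ F, G.face F ∧ a ∈ F ∧ b ∈ F

inductive EdgeKind | out | inn | bid

/-- `out` is `a → b`, `inn` is `a ← b`, `bid` is a bidirected edge. -/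
def isEdge (G : MDAG V) : EdgeKind → V → V → Prop
  | .out, a, b => G.dir a b
  | .inn, a, b => G.dir b a
  | .bid, a, b => G.bi a b

/-- The edge has an arrowhead at its right endpoint. -/
def EdgeKind.headRight : EdgeKind → Prop
  | .out => True | .inn => False | .bid => True

/-- The edge has an arrowhead at its left endpoint. -/
def EdgeKind.headLeft : EdgeKind → Prop
  | .out => False | .inn => True | .bid => True

inductive Walk (G : MDAG V) : V → V → Type
  | nil (v : V) : Walk G v v
  | cons {a b c : V} (e : EdgeKind) (h : G.isEdge e a b) (w : Walk G b c) : Walk G a c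

def Walk.support {G : MDAG V} : {a b : V} → Walk G a b → List V
  | _, _, .nil v => [v]
  | _, _, @Walk.cons _ _ a _ _ _ _ w => a :: w.support

/-- A path is a walk with no repeated vertices. -/
def Walk.IsPath {G : MDAG V} {a b : V} (w : G.Walk a b) : Prop := w.support.Nodup

/-- Auxiliary: `ph` records whether the previous edge has an arrowhead at the
current start vertex, which is internal to the overall walk. -/
def Walk.openTail {G : MDAG V} (C : Set V) : {a b : V} → Walk G a b → Prop → Prop
  | _, _, .nil _, _ => True
  | _, _, @Walk.cons _ _ m _ _ e' h' w, ph =>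
      ((ph ∧ e'.headLeft) → ∃ d ∈ C, Relation.ReflTransGen G.dir m d) ∧
      (¬ (ph ∧ e'.headLeft) → m ∉ C) ∧
      Walk.openTail C w e'.headRight

/-- The walk is open (active) given conditioning set `C`: every internal
collider has a descendant in `C` and no internal non-collider lies in `C`. -/
def Walk.openGiven {G : MDAG V} (C : Set V) : {a b : V} → Walk G a b → Prop
  | _, _, .nil _ => True
  | _, _, .cons e _ w => Walk.openTail C w e.headRight

def Walk.colliderTail {G : MDAG V} (v : V) : {a b : V} → Walk G a b → Prop → Prop
  | _, _, .nil _, _ => False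
  | _, _, @Walk.cons _ _ m _ _ e' h' w, ph =>
      (v = m ∧ ph ∧ e'.headLeft) ∨ Walk.colliderTail v w e'.headRight

/-- `v` occurs as a collider on the walk. -/
def Walk.isColliderOn {G : MDAG V} (v : V) : {a b : V} → Walk G a b → Prop
  | _, _, .nil _ => False
  | _, _, .cons e _ w => Walk.colliderTail v w e.headRight

/-- m-separation: every path from `A` to `B` is blocked by `C`. -/
def mSep (G : MDAG V) (A B C : Set V) : Prop :=
  ∀ a ∈ A, ∀ b ∈ B, ∀ w : G.Walk a b, w.IsPath → ¬ w.openGiven C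

end MDAG

open MDAG Relation in
/-- d-separation in a DAG `H`, realized as m-separation in an mDAG with no
bidirected faces. -/
def dSep {V : Type} (H : V → V → Prop) (A B C : Set V) : Prop :=
  MDAG.mSep ⟨H, fun _ => False⟩ A B C

section Aux

open Relation MDAG

variable {V : Type} {H : V → V → Prop}

/-- The mDAG realizing a DAG. -/
private def Gd (H : V → V → Prop) : MDAG V := ⟨H, fun _ => False⟩

private lemma mem_support_start : ∀ {x y : V} (w : (Gd H).Walk x y), x ∈ w.support
  | _, _, .nil v => by simp [Walk.support]
  | _, _, .cons e h w => by simp [Walk.support]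

private lemma openTail_to_openGiven {C : Set V} :
    ∀ {x y : V} (w : (Gd H).Walk x y) (ph : Prop), w.openTail C ph → w.openGiven C
  | _, _, .nil v, ph, h => trivial
  | _, _, .cons e he w, ph, h => h.2.2

/-- All edges of the walk have the given kind. -/
private def allKind (k : EdgeKind) : ∀ {x y : V}, (Gd H).Walk x y → Prop
  | _, _, .nil _ => True
  | _, _, .cons e _ w => e = k ∧ allKind k w

private lemma openTail_allOut {C : Set V} :
    ∀ {x y : V} (w : (Gd H).Walk x y), allKind .out w →
      (∀ v ∈ w.support, v ∉ C) → ∀ ph : Prop, w.openTail C ph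
  | _, _, .nil v, _, _, ph => trivial
  | x, y, .cons e he w, hall, hD, ph => by
      obtain ⟨rfl, hall'⟩ := hall
      refine ⟨?_, ?_, openTail_allOut w hall'
        (fun v hv => hD v (by simp [Walk.support, hv])) _⟩
      · rintro ⟨-, hl⟩; exact hl.elim
      · intro _; exact hD _ (mem_support_start _)

private lemma openGiven_allOut {C : Set V} :
    ∀ {x y : V} (w : (Gd H).Walk x y), allKind .out w →
      (∀ v ∈ w.support, v ∉ C) → w.openGiven C
  | _, _, .nil v, _, _ => trivial
  | x, y, .cons e he w, hall, hD =>
      openTail_allOut w hall.2 (fun v hv => hD v (by simp [Walk.support, hv])) _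

private lemma suffix_allOut :
    ∀ {x y : V} (w : (Gd H).Walk x y), allKind .out w → ∀ v ∈ w.support,
      ∃ S : (Gd H).Walk v y, allKind .out S ∧ S.support <:+ w.support := by
  intro x y w
  induction w with
  | nil u =>
    intro _ v hv
    simp only [Walk.support, List.mem_singleton] at hv
    subst hv
    exact ⟨.nil v, trivial, List.suffix_refl _⟩
  | cons e he w ih =>
    rename_i p q r
    intro hall v hv
    rcases (by simpa [Walk.support] using hv : v = p ∨ v ∈ w.support) with rfl | hv'
    · exact ⟨.cons e he w, hall, List.suffix_refl _⟩
    · obtain ⟨S, hS1, hS2⟩ := ih hall.2 v hv'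
      exact ⟨S, hS1, hS2.trans (by simpa [Walk.support] using List.suffix_cons p w.support)⟩

private lemma suffix_open {C : Set V} :
    ∀ {x y : V} (w : (Gd H).Walk x y), w.openGiven C → ∀ v ∈ w.support, v ∉ C →
      ∃ S : (Gd H).Walk v y, S.support <:+ w.support ∧ S.openTail C False := by
  intro x y w
  induction w with
  | nil u =>
    intro _ v hv hvC
    simp only [Walk.support, List.mem_singleton] at hv
    subst hv
    exact ⟨.nil v, List.suffix_refl _, trivial⟩
  | cons e he w ih =>
    rename_i p q r
    intro hop v hv hvC
    rcases (by simpa [Walk.support] using hv : v = p ∨ v ∈ w.support) with rfl | hv'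
    · exact ⟨.cons e he w, List.suffix_refl _, fun h => (h.1).elim, fun _ => hvC, hop⟩
    · obtain ⟨S, hS1, hS2⟩ := ih (openTail_to_openGiven w _ hop) v hv' hvC
      exact ⟨S, hS1.trans (by simpa [Walk.support] using List.suffix_cons p w.support), hS2⟩

private lemma exists_dirWalk (hacyc : ∀ x : V, ¬ TransGen H x x) {x y : V}
    (h : ReflTransGen H x y) :
    ∃ w : (Gd H).Walk x y, allKind .out w ∧ w.support.Nodup ∧
      ∀ v ∈ w.support, ReflTransGen H x v ∧ ReflTransGen H v y := by
  induction h using ReflTransGen.head_induction_on with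
  | refl =>
    refine ⟨.nil y, trivial, by simp [Walk.support], ?_⟩
    intro v hv
    simp only [Walk.support, List.mem_singleton] at hv
    subst hv
    exact ⟨ReflTransGen.refl, ReflTransGen.refl⟩
  | head hxz hzy ih =>
    rename_i x' z
    obtain ⟨w, hall, hnd, hmem⟩ := ih
    by_cases hx : x' ∈ w.support
    · exact absurd (TransGen.head' hxz (hmem x' hx).1) (hacyc x')
    · refine ⟨.cons .out hxz w, ⟨rfl, hall⟩, by simp [Walk.support, hnd, hx], ?_⟩
      intro v hv
      rcases (by simpa [Walk.support] using hv : v = x' ∨ v ∈ w.support) with rfl | hv'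
      · exact ⟨ReflTransGen.refl, ReflTransGen.head hxz hzy⟩
      · exact ⟨ReflTransGen.head hxz (hmem v hv').1, (hmem v hv').2⟩

private lemma exists_dirWalk_inn (hacyc : ∀ x : V, ¬ TransGen H x x) {x y : V}
    (h : ReflTransGen H x y) :
    ∃ w : (Gd H).Walk y x, allKind .inn w ∧ w.support.Nodup ∧
      ∀ v ∈ w.support, ReflTransGen H x v ∧ ReflTransGen H v y := by
  induction h with
  | refl =>
    refine ⟨.nil x, trivial, by simp [Walk.support], ?_⟩
    intro v hv
    simp only [Walk.support, List.mem_singleton] at hv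
    subst hv
    exact ⟨ReflTransGen.refl, ReflTransGen.refl⟩
  | tail hxz hstep ih =>
    rename_i z y'
    obtain ⟨w, hall, hnd, hmem⟩ := ih
    by_cases hy : y' ∈ w.support
    · exact absurd (TransGen.tail' (hmem y' hy).2 hstep) (hacyc y')
    · refine ⟨.cons .inn hstep w, ⟨rfl, hall⟩, by simp [Walk.support, hnd, hy], ?_⟩
      intro v hv
      rcases (by simpa [Walk.support] using hv : v = y' ∨ v ∈ w.support) with rfl | hv'
      · exact ⟨hxz.tail hstep, ReflTransGen.refl⟩
      · exact ⟨(hmem v hv').1, (hmem v hv').2.tail hstep⟩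

private lemma find_first {C C' : Set V} (hCC : C ⊆ C') :
    ∀ {x y : V} (w : (Gd H).Walk x y) (ph : Prop),
      w.openTail C' ph → ¬ w.openTail C ph →
      ∃ m, (∃ d ∈ C', ReflTransGen H m d) ∧ (∀ d ∈ C, ¬ ReflTransGen H m d) ∧
        ∃ w₁ : (Gd H).Walk x m, w₁.openTail C ph ∧ w₁.support <+: w.support
  | _, _, .nil v, ph, _, hbl => absurd trivial hbl
  | x, y, .cons e he w, ph, hop, hbl => by
      classical
      obtain ⟨h1', h2', h3'⟩ := hop
      by_cases hc1 : (ph ∧ e.headLeft) → ∃ d ∈ C, ReflTransGen H x d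
      · have hc2 : ¬ (ph ∧ e.headLeft) → x ∉ C := fun hn hxC => h2' hn (hCC hxC)
        have hrest : ¬ w.openTail C e.headRight := fun hr => hbl ⟨hc1, hc2, hr⟩
        obtain ⟨m, hd', hnd, w₁, hw₁, hpre⟩ := find_first hCC w e.headRight h3' hrest
        refine ⟨m, hd', hnd, .cons e he w₁, ⟨hc1, hc2, hw₁⟩, ?_⟩
        obtain ⟨t, ht⟩ := hpre
        exact ⟨t, by simp [Walk.support, ht]⟩
      · push_neg at hc1
        obtain ⟨hph, hnod⟩ := hc1
        exact ⟨x, h1' hph, hnod, .nil x, trivial, ⟨w.support, by simp [Walk.support]⟩⟩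

private lemma find_last {C C' : Set V} (hCC : C ⊆ C') :
    ∀ {x y : V} (w : (Gd H).Walk x y) (ph : Prop),
      w.openTail C' ph → ¬ w.openTail C ph →
      ∃ m, (∃ d ∈ C', ReflTransGen H m d) ∧ (∀ d ∈ C, ¬ ReflTransGen H m d) ∧
        ∃ w₂ : (Gd H).Walk m y, w₂.openGiven C ∧ w₂.support <:+ w.support
  | _, _, .nil v, ph, _, hbl => absurd trivial hbl
  | x, y, .cons e he w, ph, hop, hbl => by
      classical
      obtain ⟨h1', h2', h3'⟩ := hop
      by_cases hrest : w.openTail C e.headRight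
      · by_cases hc1 : (ph ∧ e.headLeft) → ∃ d ∈ C, ReflTransGen H x d
        · exact absurd ⟨hc1, fun hn hxC => h2' hn (hCC hxC), hrest⟩ hbl
        · push_neg at hc1
          obtain ⟨hph, hnod⟩ := hc1
          exact ⟨x, h1' hph, hnod, .cons e he w, hrest, List.suffix_refl _⟩
      · obtain ⟨m, hd', hnd, w₂, hw₂, hsuf⟩ := find_last hCC w e.headRight h3' hrest
        exact ⟨m, hd', hnd, w₂, hw₂,
          hsuf.trans (by simpa [Walk.support] using List.suffix_cons x w.support)⟩

private lemma splice_out {C : Set V} {m b : V} (Qw : (Gd H).Walk m b)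
    (hQout : allKind .out Qw) (hQnd : Qw.support.Nodup) (hQC : ∀ v ∈ Qw.support, v ∉ C) :
    ∀ {x y : V} (w₁ : (Gd H).Walk x y), y = m → ∀ ph : Prop,
      w₁.openTail C ph → w₁.support.Nodup →
      ∃ R : (Gd H).Walk x b, R.openTail C ph ∧ R.support.Nodup ∧
        ∀ v ∈ R.support, v ∈ w₁.support ∨ v ∈ Qw.support := by
  intro x y w₁
  induction w₁ with
  | nil v =>
    rintro rfl ph _ _
    obtain ⟨S, hS1, hS2⟩ := suffix_allOut Qw hQout v (mem_support_start Qw)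
    exact ⟨S, openTail_allOut S hS1 (fun u hu => hQC u (hS2.sublist.subset hu)) ph,
      hQnd.sublist hS2.sublist, fun u hu => Or.inr (hS2.sublist.subset hu)⟩
  | cons e he w ih =>
    rename_i p q r
    rintro rfl ph hop hnd
    by_cases hx : p ∈ Qw.support
    · obtain ⟨S, hS1, hS2⟩ := suffix_allOut Qw hQout p hx
      exact ⟨S, openTail_allOut S hS1 (fun u hu => hQC u (hS2.sublist.subset hu)) ph,
        hQnd.sublist hS2.sublist, fun u hu => Or.inr (hS2.sublist.subset hu)⟩
    · have hnd' : w.support.Nodup := by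
        have := (List.nodup_cons.mp (by simpa [Walk.support] using hnd)).2
        exact this
      have hxW : p ∉ w.support :=
        (List.nodup_cons.mp (by simpa [Walk.support] using hnd)).1
      obtain ⟨R', hR'op, hR'nd, hR'mem⟩ := ih rfl e.headRight hop.2.2 hnd'
      refine ⟨.cons e he R', ⟨hop.1, hop.2.1, hR'op⟩, ?_, ?_⟩
      · simp only [Walk.support, List.nodup_cons]
        refine ⟨fun hxR => ?_, hR'nd⟩
        rcases hR'mem p hxR with h | h
        · exact hxW h
        · exact hx h
      · intro u hu
        rcases (by simpa [Walk.support] using hu : u = p ∨ u ∈ R'.support) with rfl | hu'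
        · exact Or.inl (mem_support_start _)
        · rcases hR'mem u hu' with h | h
          · exact Or.inl (by simp [Walk.support, h])
          · exact Or.inr h

private lemma splice_inn {C : Set V} {m b : V} (w₂ : (Gd H).Walk m b)
    (hw₂ : w₂.openGiven C) (hnd₂ : w₂.support.Nodup) :
    ∀ {x y : V} (q : (Gd H).Walk x y), y = m → allKind .inn q → q.support.Nodup →
      (∀ v ∈ q.support, v ∉ C) →
      ∃ R : (Gd H).Walk x b, R.openTail C False ∧ R.support.Nodup ∧
        ∀ v ∈ R.support, v ∈ q.support ∨ v ∈ w₂.support := by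
  intro x y q
  induction q with
  | nil v =>
    rintro rfl _ _ hqC
    obtain ⟨S, hS1, hS2⟩ := suffix_open w₂ hw₂ v (mem_support_start w₂)
      (hqC v (mem_support_start _))
    exact ⟨S, hS2, hnd₂.sublist hS1.sublist, fun u hu => Or.inr (hS1.sublist.subset hu)⟩
  | cons e he q' ih =>
    rename_i p z r
    rintro rfl hall hnd hqC
    by_cases hx : p ∈ w₂.support
    · obtain ⟨S, hS1, hS2⟩ := suffix_open w₂ hw₂ p hx (hqC p (mem_support_start _))
      exact ⟨S, hS2, hnd₂.sublist hS1.sublist, fun u hu => Or.inr (hS1.sublist.subset hu)⟩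
    · obtain ⟨rfl, hall'⟩ := hall
      have hnd' : q'.support.Nodup :=
        (List.nodup_cons.mp (by simpa [Walk.support] using hnd)).2
      have hxq : p ∉ q'.support :=
        (List.nodup_cons.mp (by simpa [Walk.support] using hnd)).1
      have hqC' : ∀ v ∈ q'.support, v ∉ C :=
        fun v hv => hqC v (by simp [Walk.support, hv])
      obtain ⟨R', hR'op, hR'nd, hR'mem⟩ := ih rfl hall' hnd' hqC'
      refine ⟨.cons .inn he R', ⟨fun h => h.1.elim,
        fun _ => hqC p (mem_support_start _), hR'op⟩, ?_, ?_⟩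
      · simp only [Walk.support, List.nodup_cons]
        refine ⟨fun hxR => ?_, hR'nd⟩
        rcases hR'mem p hxR with h | h
        · exact hxq h
        · exact hx h
      · intro u hu
        rcases (by simpa [Walk.support] using hu : u = p ∨ u ∈ R'.support) with rfl | hu'
        · exact Or.inl (mem_support_start _)
        · rcases hR'mem u hu' with h | h
          · exact Or.inl (by simp [Walk.support, h])
          · exact Or.inr h

end Aux


open Relation MDAG in
/-- In a DAG, if `a ⊥_d b ∣ D` and `a` and `b` are d-connected given
`D ∪ {s}`, then `s` is not an ancestor of `b`, and (by symmetry) not an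
ancestor of `a` (ancestry via directed paths, possibly of length 0). -/
theorem unblocking_vertex_not_ancestor {V : Type} [Fintype V] (H : V → V → Prop)
    (hacyclic : ∀ x : V, ¬ Relation.TransGen H x x)
    (a b s : V) (D : Set V)
    (hsep : dSep H {a} {b} D)
    (hnsep : ¬ dSep H {a} {b} (D ∪ {s})) :
    ¬ Relation.ReflTransGen H s b ∧ ¬ Relation.ReflTransGen H s a := by
  classical
  have hCC : D ⊆ D ∪ {s} := Set.subset_union_left
  unfold dSep MDAG.mSep at hnsep
  push_neg at hnsep
  obtain ⟨a', ha', b', hb', w, hpath, hopen⟩ := hnsep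
  rw [Set.mem_singleton_iff] at ha' hb'
  subst ha'; subst hb'
  have hsep' : ∀ w : (Gd H).Walk a' b', w.IsPath → ¬ w.openGiven D :=
    fun w hp => hsep a' rfl b' rfl w hp
  constructor
  · -- s is not an ancestor of b'
    intro hanc
    cases w with
    | nil => exact hsep' (.nil _) (by simp [Walk.IsPath, Walk.support]) trivial
    | cons e he w' =>
      rename_i z
      have hbl : ¬ Walk.openTail D w' e.headRight :=
        hsep' (.cons e he w') hpath
      have hop' : Walk.openTail (D ∪ {s}) w' e.headRight := hopen
      obtain ⟨m, ⟨d, hd, hmd⟩, hnod, w₁, hw₁, hpre⟩ :=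
        find_first hCC w' e.headRight hop' hbl
      have hms : ReflTransGen H m s := by
        rcases hd with hd | hd
        · exact absurd hmd (hnod d hd)
        · rw [Set.mem_singleton_iff] at hd; subst hd; exact hmd
      have hmb : ReflTransGen H m b' := hms.trans hanc
      obtain ⟨Qw, hQout, hQnd, hQmem⟩ := exists_dirWalk hacyclic hmb
      have hQC : ∀ v ∈ Qw.support, v ∉ D := fun v hv hvD => hnod v hvD (hQmem v hv).1
      have hpath' : (a' :: w'.support).Nodup := by
        simpa [Walk.IsPath, Walk.support] using hpath
      by_cases ha : a' ∈ Qw.support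
      · obtain ⟨S, hS1, hS2⟩ := suffix_allOut Qw hQout a' ha
        exact hsep' S (hQnd.sublist hS2.sublist)
          (openGiven_allOut S hS1 (fun u hu => hQC u (hS2.sublist.subset hu)))
      · have hnd₁ : w₁.support.Nodup := hpath'.of_cons.sublist hpre.sublist
        obtain ⟨R', hR'op, hR'nd, hR'mem⟩ :=
          splice_out Qw hQout hQnd hQC w₁ rfl e.headRight hw₁ hnd₁
        have hnaR : a' ∉ R'.support := by
          intro hmem
          rcases hR'mem a' hmem with h | h
          · exact (List.nodup_cons.mp hpath').1 (hpre.sublist.subset h)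
          · exact ha h
        refine hsep' (.cons e he R') ?_ hR'op
        simp only [Walk.IsPath, Walk.support, List.nodup_cons]
        exact ⟨hnaR, hR'nd⟩
  · -- s is not an ancestor of a'
    intro hanc
    cases w with
    | nil => exact hsep' (.nil _) (by simp [Walk.IsPath, Walk.support]) trivial
    | cons e he w' =>
      have hbl : ¬ Walk.openTail D w' e.headRight :=
        hsep' (.cons e he w') hpath
      have hop' : Walk.openTail (D ∪ {s}) w' e.headRight := hopen
      obtain ⟨m, ⟨d, hd, hmd⟩, hnod, w₂, hw₂, hsuf⟩ :=
        find_last hCC w' e.headRight hop' hbl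
      have hms : ReflTransGen H m s := by
        rcases hd with hd | hd
        · exact absurd hmd (hnod d hd)
        · rw [Set.mem_singleton_iff] at hd; subst hd; exact hmd
      have hma : ReflTransGen H m a' := hms.trans hanc
      obtain ⟨Qa, hQinn, hQnd, hQmem⟩ := exists_dirWalk_inn hacyclic hma
      have hQC : ∀ v ∈ Qa.support, v ∉ D := fun v hv hvD => hnod v hvD (hQmem v hv).1
      have hpath' : (a' :: w'.support).Nodup := by
        simpa [Walk.IsPath, Walk.support] using hpath
      have hnd₂ : w₂.support.Nodup := hpath'.of_cons.sublist hsuf.sublist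
      obtain ⟨R, hRop, hRnd, hRmem⟩ :=
        splice_inn w₂ hw₂ hnd₂ Qa rfl hQinn hQnd hQC
      exact hsep' R hRnd (openTail_to_openGiven R False hRop)
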